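/- The range of the symbol F over ℝ² equals the closed interval [−1/2, 1]. -/
import Mathlib


open scoped ENNReal
open Filter

noncomputable section

/-- The Hilbert space `ℓ²(ℤ², ℂ)`. -/
abbrev H2 : Type := lp (fun _ : ℤ × ℤ => ℂ) 2

/-- The triangular-lattice Laplacian, acting pointwise on functions `ℤ² → ℂ`. -/
def lapT (f : ℤ × ℤ → ℂ) : ℤ × ℤ → ℂ := fun n =>
  (1/6 : ℂ) * (f (n.1 + 1, n.2) + f (n.1 - 1, n.2) + f (n.1, n.2 + 1)
    + f (n.1, n.2 - 1) + f (n.1 + 1, n.2 - 1) + f (n.1 - 1, n.2 + 1))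

/-- The symbol `F(x₁,x₂) = (1/3)(cos x₁ + cos x₂ + cos (x₁ - x₂))`. -/
def symbF (x : ℝ × ℝ) : ℝ := (1/3) * (Real.cos x.1 + Real.cos x.2 + Real.cos (x.1 - x.2))

/-- `∂₁ F`. -/
def d1F (x : ℝ × ℝ) : ℝ := -(1/3) * (Real.sin x.1 + Real.sin (x.1 - x.2))

/-- `∂₂ F`. -/
def d2F (x : ℝ × ℝ) : ℝ := -(1/3) * (Real.sin x.2 - Real.sin (x.1 - x.2))

/-- Japanese bracket `⟨t⟩ = √(1/2 + t²)`. -/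
def jap (t : ℝ) : ℝ := Real.sqrt (1/2 + t^2)

/-- The weight `Λ(n₁,n₂) = ⟨n₁⟩ + ⟨n₂⟩`. -/
def Lam (n : ℤ × ℤ) : ℝ := jap (n.1 : ℝ) + jap (n.2 : ℝ)

/-- The conjugate operator `A`, acting pointwise on functions `ℤ² → ℂ`. -/
def opA (f : ℤ × ℤ → ℂ) : ℤ × ℤ → ℂ := fun n =>
  (Complex.I / 6) *
    (((n.1 : ℂ) + 1/2) * f (n.1 + 1, n.2) - ((n.1 : ℂ) - 1/2) * f (n.1 - 1, n.2)
      + ((n.2 : ℂ) + 1/2) * f (n.1, n.2 + 1) - ((n.2 : ℂ) - 1/2) * f (n.1, n.2 - 1)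
      + ((n.2 : ℂ) - (n.1 : ℂ) + 1) * f (n.1 - 1, n.2 + 1)
      + ((n.1 : ℂ) - (n.2 : ℂ) + 1) * f (n.1 + 1, n.2 - 1))

/-- The perturbed Laplacian `Δ̃` with weight `m`, acting pointwise on functions `ℤ² → ℂ`:
`(Δ̃ f)(n) = (1/6) Σ_{l ∼ n} f(l) / (√(m n) √(m l))`. -/
def lapPert (m : ℤ × ℤ → ℝ) (f : ℤ × ℤ → ℂ) : ℤ × ℤ → ℂ := fun n =>
  (1/6 : ℂ) *
    (f (n.1 + 1, n.2) / ((Real.sqrt (m n) * Real.sqrt (m (n.1 + 1, n.2)) : ℝ) : ℂ)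
      + f (n.1 - 1, n.2) / ((Real.sqrt (m n) * Real.sqrt (m (n.1 - 1, n.2)) : ℝ) : ℂ)
      + f (n.1, n.2 + 1) / ((Real.sqrt (m n) * Real.sqrt (m (n.1, n.2 + 1)) : ℝ) : ℂ)
      + f (n.1, n.2 - 1) / ((Real.sqrt (m n) * Real.sqrt (m (n.1, n.2 - 1)) : ℝ) : ℂ)
      + f (n.1 + 1, n.2 - 1) / ((Real.sqrt (m n) * Real.sqrt (m (n.1 + 1, n.2 - 1)) : ℝ) : ℂ)
      + f (n.1 - 1, n.2 + 1) / ((Real.sqrt (m n) * Real.sqrt (m (n.1 - 1, n.2 + 1)) : ℝ) : ℂ))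

/-- The range of the symbol `F` over `ℝ²` equals `[-1/2, 1]`. -/
theorem range_symbF : Set.range symbF = Set.Icc (-(1/2) : ℝ) 1 := by
  apply Set.Subset.antisymm
  · rintro y ⟨x, rfl⟩
    unfold symbF
    constructor
    · have h := Real.cos_sub x.1 x.2
      nlinarith [Real.sin_sq_add_cos_sq x.1, Real.sin_sq_add_cos_sq x.2,
        sq_nonneg (1 + Real.cos x.1 + Real.cos x.2), sq_nonneg (Real.sin x.1 + Real.sin x.2)]
    · have h1 := Real.cos_le_one x.1
      have h2 := Real.cos_le_one x.2
      have h3 := Real.cos_le_one (x.1 - x.2)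
      linarith
  · set f : ℝ → ℝ := fun t => symbF (t, 2*t) with hf
    have hc : Continuous f := by
      simp only [hf, symbF]; fun_prop
    have hab : (0:ℝ) ≤ 2*Real.pi/3 := by positivity
    have hIVT := intermediate_value_Icc' hab hc.continuousOn
    have h0 : f 0 = 1 := by
      simp [hf, symbF]; norm_num
    have hb : f (2*Real.pi/3) = -(1/2) := by
      have c1 : Real.cos (2*Real.pi/3) = -(1/2) := by
        have : 2*Real.pi/3 = Real.pi - Real.pi/3 := by ring
        rw [this, Real.cos_pi_sub, Real.cos_pi_div_three]
      have c2 : Real.cos (2*(2*Real.pi/3)) = -(1/2) := by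
        have : 2*(2*Real.pi/3) = Real.pi + Real.pi/3 := by ring
        rw [this, Real.cos_add]; simp [Real.cos_pi_div_three]
      have c3 : Real.cos (2*Real.pi/3 - 2*(2*Real.pi/3)) = -(1/2) := by
        have : 2*Real.pi/3 - 2*(2*Real.pi/3) = -(Real.pi - Real.pi/3) := by ring
        rw [this, Real.cos_neg, Real.cos_pi_sub, Real.cos_pi_div_three]
      simp only [hf, symbF, c1, c2, c3]
      ring
    rw [h0, hb] at hIVT
    intro y hy
    obtain ⟨t, _, ht⟩ := hIVT hy
    exact ⟨(t, 2*t), ht⟩
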